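/- Let P^{S,1}, …, P^{S,K} be probability measures on X with densities p^{S,i} w.r.t. a σ-finite measure μ, let π = (π_1,…,π_K) be a probability vector, and let f^{S,i}, f̂ : X → Y_Δ be measurable labeling functions. Define the mixture label marginals a, b ∈ Y_Δ by a_y = Σ_{i=1}^K π_i ∫ f^{S,i}(x, y) p^{S,i}(x) dμ(x) and b_y = Σ_{i=1}^K π_i ∫ f̂(x, y) p^{S,i}(x) dμ(x). Then d_{1/2}(a, b) ≤ [ Σ_{i=1}^K π_i L(f̂, f^{S,i}, P^{S,i}) ]^{1/2}, where the loss is the Hellinger loss. -/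

import Mathlib

open MeasureTheory

/-- Integrability of a bounded nonneg function times an integrable density. -/
lemma integrable_bdd_mul {X : Type*} [MeasurableSpace X] {μ : Measure X} {q p : X → ℝ}
    (hq : Measurable q) (hp : Measurable p) (hp_int : Integrable p μ)
    (hq0 : ∀ x, 0 ≤ q x) (hq1 : ∀ x, q x ≤ 1) (hp0 : ∀ x, 0 ≤ p x) :
    Integrable (fun x => q x * p x) μ := by
  refine hp_int.mono ((hq.mul hp).aestronglyMeasurable) (ae_of_all _ fun x => ?_)
  rw [Real.norm_eq_abs, Real.norm_eq_abs, abs_of_nonneg (mul_nonneg (hq0 x) (hp0 x)),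
    abs_of_nonneg (hp0 x)]
  exact mul_le_of_le_one_left (hp0 x) (hq1 x)

/-- Cauchy–Schwarz for integrals against a density. -/
lemma integral_sqrt_mul_sqrt_le {X : Type*} [MeasurableSpace X] {μ : Measure X} {g h p : X → ℝ}
    (hg : Measurable g) (hh : Measurable h) (hp : Measurable p)
    (hg0 : ∀ x, 0 ≤ g x) (hh0 : ∀ x, 0 ≤ h x) (hp0 : ∀ x, 0 ≤ p x)
    (hgp : Integrable (fun x => g x * p x) μ) (hhp : Integrable (fun x => h x * p x) μ) :
    ∫ x, Real.sqrt (g x) * Real.sqrt (h x) * p x ∂μ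
      ≤ Real.sqrt (∫ x, g x * p x ∂μ) * Real.sqrt (∫ x, h x * p x ∂μ) := by
  set F : X → ℝ := fun x => Real.sqrt (g x * p x) with hF
  set G : X → ℝ := fun x => Real.sqrt (h x * p x) with hG
  have hFmeas : Measurable F := (hg.mul hp).sqrt
  have hGmeas : Measurable G := (hh.mul hp).sqrt
  have hF2 : ∀ x, F x ^ (2 : ℝ) = g x * p x := fun x => by
    rw [show (2 : ℝ) = ((2 : ℕ) : ℝ) by norm_num, Real.rpow_natCast]
    exact Real.sq_sqrt (mul_nonneg (hg0 x) (hp0 x))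
  have hG2 : ∀ x, G x ^ (2 : ℝ) = h x * p x := fun x => by
    rw [show (2 : ℝ) = ((2 : ℕ) : ℝ) by norm_num, Real.rpow_natCast]
    exact Real.sq_sqrt (mul_nonneg (hh0 x) (hp0 x))
  have hFG : ∀ x, Real.sqrt (g x) * Real.sqrt (h x) * p x = F x * G x := by
    intro x
    rw [hF, hG]
    simp only
    rw [Real.sqrt_mul (hg0 x), Real.sqrt_mul (hh0 x),
      show Real.sqrt (g x) * Real.sqrt (p x) * (Real.sqrt (h x) * Real.sqrt (p x))
        = Real.sqrt (g x) * Real.sqrt (h x) * (Real.sqrt (p x) * Real.sqrt (p x)) by ring,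
      Real.mul_self_sqrt (hp0 x)]
  have hpq : Real.HolderConjugate 2 2 := Real.holderConjugate_iff.mpr ⟨one_lt_two, by norm_num⟩
  have hFmem : MemLp F (ENNReal.ofReal 2) μ := by
    rw [show ENNReal.ofReal 2 = 2 by simp]
    refine (memLp_two_iff_integrable_sq hFmeas.aestronglyMeasurable).2 ?_
    refine hgp.congr (ae_of_all _ fun x => ?_)
    exact (Real.sq_sqrt (mul_nonneg (hg0 x) (hp0 x))).symm
  have hGmem : MemLp G (ENNReal.ofReal 2) μ := by
    rw [show ENNReal.ofReal 2 = 2 by simp]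
    refine (memLp_two_iff_integrable_sq hGmeas.aestronglyMeasurable).2 ?_
    refine hhp.congr (ae_of_all _ fun x => ?_)
    exact (Real.sq_sqrt (mul_nonneg (hh0 x) (hp0 x))).symm
  have hCS := MeasureTheory.integral_mul_le_Lp_mul_Lq_of_nonneg hpq
    (ae_of_all _ fun x => Real.sqrt_nonneg _) (ae_of_all _ fun x => Real.sqrt_nonneg _)
    hFmem hGmem
  calc ∫ x, Real.sqrt (g x) * Real.sqrt (h x) * p x ∂μ
      = ∫ x, F x * G x ∂μ := by simp_rw [hFG]
    _ ≤ (∫ x, F x ^ (2:ℝ) ∂μ) ^ (1/(2:ℝ)) * (∫ x, G x ^ (2:ℝ) ∂μ) ^ (1/(2:ℝ)) := hCS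
    _ = Real.sqrt (∫ x, g x * p x ∂μ) * Real.sqrt (∫ x, h x * p x ∂μ) := by
        simp_rw [hF2, hG2, Real.sqrt_eq_rpow]

theorem mixture_label_marginal_hellinger_le_loss
    {X : Type*} [MeasurableSpace X]
    (μ : Measure X) [SigmaFinite μ]
    (K C : ℕ) (hK : 0 < K) (hC : 0 < C)
    (w : Fin K → ℝ) (hw_nonneg : ∀ i, 0 ≤ w i) (hw_sum : ∑ i, w i = 1)
    (pS : Fin K → X → ℝ)
    (hpS_meas : ∀ i, Measurable (pS i)) (hpS_nonneg : ∀ i x, 0 ≤ pS i x)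
    (hpS_prob : ∀ i, ∫ x, pS i x ∂μ = 1)
    (fS : Fin K → X → Fin C → ℝ) (fhat : X → Fin C → ℝ)
    (hfS_meas : ∀ i, Measurable (fS i)) (hfhat_meas : Measurable fhat)
    (hfS_simplex : ∀ i x, fS i x ∈ stdSimplex ℝ (Fin C))
    (hfhat_simplex : ∀ x, fhat x ∈ stdSimplex ℝ (Fin C))
    (a b : Fin C → ℝ)
    (ha : ∀ y, a y = ∑ i, w i * ∫ x, fS i x y * pS i x ∂μ)
    (hb : ∀ y, b y = ∑ i, w i * ∫ x, fhat x y * pS i x ∂μ) :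
    Real.sqrt (2 * ∑ y, (Real.sqrt (a y) - Real.sqrt (b y)) ^ 2)
      ≤ Real.sqrt (∑ i, w i *
          ∫ x, (2 * ∑ c, (Real.sqrt (fhat x c) - Real.sqrt (fS i x c)) ^ 2)
            * pS i x ∂μ) := by
  -- basic facts
  have hpInt : ∀ i, Integrable (pS i) μ := by
    intro i
    by_contra hni
    have h1 := hpS_prob i
    rw [integral_undef hni] at h1
    exact one_ne_zero h1.symm
  have hfS_c_meas : ∀ i c, Measurable (fun x => fS i x c) := fun i c =>
    (measurable_pi_apply c).comp (hfS_meas i)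
  have hfhat_c_meas : ∀ c, Measurable (fun x => fhat x c) := fun c =>
    (measurable_pi_apply c).comp hfhat_meas
  have hfS0 : ∀ i x c, 0 ≤ fS i x c := fun i x c => (hfS_simplex i x).1 c
  have hfhat0 : ∀ x c, 0 ≤ fhat x c := fun x c => (hfhat_simplex x).1 c
  have hfS1 : ∀ i x c, fS i x c ≤ 1 := by
    intro i x c
    rw [← (hfS_simplex i x).2]
    exact Finset.single_le_sum (fun j _ => hfS0 i x j) (Finset.mem_univ c)
  have hfhat1 : ∀ x c, fhat x c ≤ 1 := by
    intro x c
    rw [← (hfhat_simplex x).2]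
    exact Finset.single_le_sum (fun j _ => hfhat0 x j) (Finset.mem_univ c)
  -- integrabilities
  have hIu : ∀ i c, Integrable (fun x => fS i x c * pS i x) μ := fun i c =>
    integrable_bdd_mul (hfS_c_meas i c) (hpS_meas i) (hpInt i)
      (fun x => hfS0 i x c) (fun x => hfS1 i x c) (hpS_nonneg i)
  have hIv : ∀ i c, Integrable (fun x => fhat x c * pS i x) μ := fun i c =>
    integrable_bdd_mul (hfhat_c_meas c) (hpS_meas i) (hpInt i)
      (fun x => hfhat0 x c) (fun x => hfhat1 x c) (hpS_nonneg i)
  have hIs : ∀ i c, Integrable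
      (fun x => Real.sqrt (fS i x c) * Real.sqrt (fhat x c) * pS i x) μ := fun i c =>
    integrable_bdd_mul ((hfS_c_meas i c).sqrt.mul (hfhat_c_meas c).sqrt) (hpS_meas i) (hpInt i)
      (fun x => mul_nonneg (Real.sqrt_nonneg _) (Real.sqrt_nonneg _))
      (fun x => mul_le_one₀ (Real.sqrt_le_one.mpr (hfS1 i x c)) (Real.sqrt_nonneg _)
        (Real.sqrt_le_one.mpr (hfhat1 x c)))
      (hpS_nonneg i)
  have hIsq : ∀ i c, Integrable
      (fun x => (Real.sqrt (fhat x c) - Real.sqrt (fS i x c)) ^ 2 * pS i x) μ := by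
    intro i c
    refine integrable_bdd_mul (((hfhat_c_meas c).sqrt.sub (hfS_c_meas i c).sqrt).pow_const 2)
      (hpS_meas i) (hpInt i) (fun x => sq_nonneg _) (fun x => ?_) (hpS_nonneg i)
    have h1 : Real.sqrt (fhat x c) ≤ 1 := Real.sqrt_le_one.mpr (hfhat1 x c)
    have h2 : Real.sqrt (fS i x c) ≤ 1 := Real.sqrt_le_one.mpr (hfS1 i x c)
    have h3 : 0 ≤ Real.sqrt (fhat x c) := Real.sqrt_nonneg _
    have h4 : 0 ≤ Real.sqrt (fS i x c) := Real.sqrt_nonneg _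
    nlinarith
  -- nonnegativity of a, b
  have ha0 : ∀ c, 0 ≤ a c := by
    intro c; rw [ha c]
    exact Finset.sum_nonneg fun i _ => mul_nonneg (hw_nonneg i)
      (integral_nonneg fun x => mul_nonneg (hfS0 i x c) (hpS_nonneg i x))
  have hb0 : ∀ c, 0 ≤ b c := by
    intro c; rw [hb c]
    exact Finset.sum_nonneg fun i _ => mul_nonneg (hw_nonneg i)
      (integral_nonneg fun x => mul_nonneg (hfhat0 x c) (hpS_nonneg i x))
  -- key cross-term bound
  have hkey : ∀ c, ∑ i, w i * ∫ x, Real.sqrt (fS i x c) * Real.sqrt (fhat x c) * pS i x ∂μ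
      ≤ Real.sqrt (a c) * Real.sqrt (b c) := by
    intro c
    have step1 : ∀ i, w i * ∫ x, Real.sqrt (fS i x c) * Real.sqrt (fhat x c) * pS i x ∂μ
        ≤ w i * (Real.sqrt (∫ x, fS i x c * pS i x ∂μ) *
          Real.sqrt (∫ x, fhat x c * pS i x ∂μ)) := by
      intro i
      refine mul_le_mul_of_nonneg_left ?_ (hw_nonneg i)
      exact integral_sqrt_mul_sqrt_le (hfS_c_meas i c) (hfhat_c_meas c) (hpS_meas i)
        (fun x => hfS0 i x c) (fun x => hfhat0 x c) (hpS_nonneg i) (hIu i c) (hIv i c)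
    refine le_trans (Finset.sum_le_sum fun i _ => step1 i) ?_
    -- discrete Cauchy–Schwarz
    have hCS := Finset.sum_sq_le_sum_mul_sum_of_sq_eq_mul Finset.univ
      (r := fun i => w i * (Real.sqrt (∫ x, fS i x c * pS i x ∂μ) *
        Real.sqrt (∫ x, fhat x c * pS i x ∂μ)))
      (f := fun i => w i * ∫ x, fS i x c * pS i x ∂μ)
      (g := fun i => w i * ∫ x, fhat x c * pS i x ∂μ)
      (fun i _ => mul_nonneg (hw_nonneg i)
        (integral_nonneg fun x => mul_nonneg (hfS0 i x c) (hpS_nonneg i x)))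
      (fun i _ => mul_nonneg (hw_nonneg i)
        (integral_nonneg fun x => mul_nonneg (hfhat0 x c) (hpS_nonneg i x)))
      (fun i _ => by
        have h1 := Real.sq_sqrt (integral_nonneg fun x => mul_nonneg (hfS0 i x c)
          (hpS_nonneg i x) : 0 ≤ ∫ x, fS i x c * pS i x ∂μ)
        have h2 := Real.sq_sqrt (integral_nonneg fun x => mul_nonneg (hfhat0 x c)
          (hpS_nonneg i x) : 0 ≤ ∫ x, fhat x c * pS i x ∂μ)
        linear_combination (w i) ^ 2 * Real.sqrt (∫ x, fhat x c * pS i x ∂μ) ^ 2 * h1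
          + (w i) ^ 2 * (∫ x, fS i x c * pS i x ∂μ) * h2)
    have hsum_nonneg : 0 ≤ ∑ i, w i * (Real.sqrt (∫ x, fS i x c * pS i x ∂μ) *
        Real.sqrt (∫ x, fhat x c * pS i x ∂μ)) :=
      Finset.sum_nonneg fun i _ => mul_nonneg (hw_nonneg i)
        (mul_nonneg (Real.sqrt_nonneg _) (Real.sqrt_nonneg _))
    have hab : (∑ i, w i * ∫ x, fS i x c * pS i x ∂μ) * ∑ i, w i * ∫ x, fhat x c * pS i x ∂μ
        = a c * b c := by rw [ha c, hb c]
    rw [hab] at hCS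
    have := (Real.le_sqrt hsum_nonneg (mul_nonneg (ha0 c) (hb0 c))).2 hCS
    rwa [Real.sqrt_mul (ha0 c)] at this
  -- pointwise expansion of the integral of the squared Hellinger integrand
  have hpt : ∀ i c, ∫ x, (Real.sqrt (fhat x c) - Real.sqrt (fS i x c)) ^ 2 * pS i x ∂μ
      = (∫ x, fhat x c * pS i x ∂μ) + (∫ x, fS i x c * pS i x ∂μ)
        - 2 * ∫ x, Real.sqrt (fS i x c) * Real.sqrt (fhat x c) * pS i x ∂μ := by
    intro i c
    have hpw : ∀ x, (Real.sqrt (fhat x c) - Real.sqrt (fS i x c)) ^ 2 * pS i x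
        = (fhat x c * pS i x + fS i x c * pS i x)
          - 2 * (Real.sqrt (fS i x c) * Real.sqrt (fhat x c) * pS i x) := by
      intro x
      have e1 := Real.sq_sqrt (hfhat0 x c)
      have e2 := Real.sq_sqrt (hfS0 i x c)
      linear_combination pS i x * e1 + pS i x * e2
    simp_rw [hpw]
    have hadd : Integrable (fun x => fhat x c * pS i x + fS i x c * pS i x) μ :=
      (hIv i c).add (hIu i c)
    have hmul : Integrable (fun x => 2 * (Real.sqrt (fS i x c) * Real.sqrt (fhat x c) * pS i x)) μ :=
      (hIs i c).const_mul 2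
    rw [integral_sub hadd hmul, integral_add (hIv i c) (hIu i c), integral_const_mul]
  -- per-coordinate inequality
  have hper : ∀ c, (Real.sqrt (a c) - Real.sqrt (b c)) ^ 2
      ≤ ∑ i, w i * ∫ x, (Real.sqrt (fhat x c) - Real.sqrt (fS i x c)) ^ 2 * pS i x ∂μ := by
    intro c
    have hsum : ∑ i, w i * ∫ x, (Real.sqrt (fhat x c) - Real.sqrt (fS i x c)) ^ 2 * pS i x ∂μ
        = b c + a c
          - 2 * ∑ i, w i * ∫ x, Real.sqrt (fS i x c) * Real.sqrt (fhat x c) * pS i x ∂μ := by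
      rw [ha c, hb c, Finset.mul_sum, ← Finset.sum_add_distrib, ← Finset.sum_sub_distrib]
      exact Finset.sum_congr rfl fun i _ => by rw [hpt i c]; ring
    rw [hsum]
    have e1 := Real.sq_sqrt (ha0 c)
    have e2 := Real.sq_sqrt (hb0 c)
    have hk := hkey c
    nlinarith
  -- conclude
  apply Real.sqrt_le_sqrt
  have hswap : ∑ i, w i *
      ∫ x, (2 * ∑ c, (Real.sqrt (fhat x c) - Real.sqrt (fS i x c)) ^ 2) * pS i x ∂μ
      = 2 * ∑ c, ∑ i, w i *
          ∫ x, (Real.sqrt (fhat x c) - Real.sqrt (fS i x c)) ^ 2 * pS i x ∂μ := by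
    have hBi : ∀ i, ∫ x, (2 * ∑ c, (Real.sqrt (fhat x c) - Real.sqrt (fS i x c)) ^ 2)
        * pS i x ∂μ
        = 2 * ∑ c, ∫ x, (Real.sqrt (fhat x c) - Real.sqrt (fS i x c)) ^ 2 * pS i x ∂μ := by
      intro i
      have hpw : ∀ x, (2 * ∑ c, (Real.sqrt (fhat x c) - Real.sqrt (fS i x c)) ^ 2) * pS i x
          = ∑ c, 2 * ((Real.sqrt (fhat x c) - Real.sqrt (fS i x c)) ^ 2 * pS i x) := by
        intro x
        rw [mul_assoc, Finset.sum_mul, Finset.mul_sum]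
      simp_rw [hpw]
      rw [integral_finset_sum _ (fun c _ => (hIsq i c).const_mul 2)]
      simp_rw [integral_const_mul]
      rw [← Finset.mul_sum]
    simp_rw [hBi]
    calc ∑ i, w i * (2 * ∑ c, ∫ x,
          (Real.sqrt (fhat x c) - Real.sqrt (fS i x c)) ^ 2 * pS i x ∂μ)
        = ∑ i, ∑ c, 2 * (w i * ∫ x,
            (Real.sqrt (fhat x c) - Real.sqrt (fS i x c)) ^ 2 * pS i x ∂μ) := by
          refine Finset.sum_congr rfl fun i _ => ?_
          rw [Finset.mul_sum, Finset.mul_sum]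
          exact Finset.sum_congr rfl fun c _ => by ring
      _ = ∑ c, ∑ i, 2 * (w i * ∫ x,
            (Real.sqrt (fhat x c) - Real.sqrt (fS i x c)) ^ 2 * pS i x ∂μ) := Finset.sum_comm
      _ = 2 * ∑ c, ∑ i, w i * ∫ x,
            (Real.sqrt (fhat x c) - Real.sqrt (fS i x c)) ^ 2 * pS i x ∂μ := by
          simp_rw [Finset.mul_sum]
  rw [hswap]
  have := Finset.sum_le_sum (fun c (_ : c ∈ Finset.univ) => hper c)
  linarith
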